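/- Let m ≥ 1 be a natural number, L : Fin m → ℝ a family of nonnegative lengths, C : Fin m → Fin m → ℝ a symmetric traffic matrix with nonnegative entries, and π a permutation of Fin m. For indices i, j with π i < π j define the gap g(i, j) := Σ over k with π i < π k < π j of L k. Let T₁ ≤ T₂ ≤ … ≤ T_{m(m−1)/2} be the values { C i j : i < j } sorted in non-decreasing order (with multiplicity) and let Λ₁ ≤ Λ₂ ≤ … ≤ Λ_m be the lengths L sorted in non-decreasing order. Then, with Δ_k := k(k+1)/2, Σ over pairs (i, j) with π i < π j of C i j · g(i, j) ≥ Σ over k from 1 to m−1 of (Σ over l from Δ_{k−1}+1 to Δ_k of T_l) · (Σ over t from 1 to m−1−k of Λ_t). -/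

import Mathlib

open Finset

private lemma aux_cons_take {a : ℝ} {L : List ℝ} (hs : (a :: L).Pairwise (· ≤ ·)) :
    ∀ n, n ≤ L.length → ((a :: L).take n).sum ≤ (L.take n).sum := by
  intro n hn
  cases n with
  | zero => simp
  | succ n' =>
    rw [List.take_succ_cons, List.sum_cons,
      List.sum_take_succ _ _ hn]
    have ha : a ≤ L[n'] := (List.pairwise_cons.mp hs).1 _ (List.getElem_mem hn)
    linarith

private lemma sublist_take_sum : ∀ {l L : List ℝ}, l.Sublist L → L.Pairwise (· ≤ ·) →
    (L.take l.length).sum ≤ l.sum := by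
  intro l L h
  induction h with
  | slnil => simp
  | @cons l L2 a h ih =>
    intro hs
    calc ((a :: L2).take l.length).sum ≤ (L2.take l.length).sum :=
          aux_cons_take hs _ h.length_le
      _ ≤ l.sum := ih ((List.pairwise_cons.mp hs).2)
  | @cons_cons l L2 a h ih =>
    intro hs
    rw [List.length_cons, List.take_succ_cons, List.sum_cons, List.sum_cons]
    exact add_le_add_right (ih ((List.pairwise_cons.mp hs).2)) a

private lemma multiset_take_sort_le (s t : Multiset ℝ) (h : s ≤ t) :
    ((Multiset.sort t (· ≤ ·)).take (Multiset.card s)).sum ≤ s.sum := by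
  have h1 : (Multiset.sort s (· ≤ ·)).Subperm (Multiset.sort t (· ≤ ·)) := by
    rw [← Multiset.coe_le, Multiset.sort_eq, Multiset.sort_eq]; exact h
  have h2 := List.sublist_of_subperm_of_pairwise h1
    (Multiset.pairwise_sort _ _) (Multiset.pairwise_sort _ _)
  have h3 := sublist_take_sum h2 (Multiset.pairwise_sort _ _)
  have h4 : (Multiset.sort s (· ≤ ·)).length = Multiset.card s := Multiset.length_sort _
  have h5 : (Multiset.sort s (· ≤ ·)).sum = s.sum := by
    conv_rhs => rw [← Multiset.sort_eq s (· ≤ ·)]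
    exact (Multiset.sum_coe _).symm
  rw [h4, h5] at h3
  exact h3

private lemma sum_take_getD (l : List ℝ) : ∀ s, (l.take s).sum = ∑ t ∈ range s, l.getD t 0 := by
  intro s
  induction s with
  | zero => simp
  | succ s ih =>
    rw [Finset.sum_range_succ, ← ih]
    rcases lt_or_ge s l.length with h | h
    · rw [List.sum_take_succ _ _ h, List.getD_eq_getElem _ _ h]
    · rw [List.getD_eq_default _ _ h, List.take_of_length_le h,
        List.take_of_length_le (le_trans h (Nat.le_succ _)), add_zero]

private lemma count_ge (m c : ℕ) : ∑ b ∈ range m, (if c ≤ b then (1:ℕ) else 0) = m - c := by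
  induction m with
  | zero => simp
  | succ m ih => rw [Finset.sum_range_succ, ih]; split <;> omega

private lemma tri_key (k : ℕ) : k * (k+1) / 2 + (k+1) = (k+1) * (k+1+1) / 2 := by
  have h2 : (k+1) * (k+1+1) = k * (k+1) + (k+1) * 2 := by ring
  rw [h2, Nat.add_mul_div_right _ _ (by norm_num : 0 < 2)]

private lemma tri_sum (m c : ℕ) : ∑ j ∈ range m, (j + 1 - c) = (m - c) * (m - c + 1) / 2 := by
  induction m with
  | zero => simp
  | succ m ih =>
    rw [Finset.sum_range_succ, ih]
    rcases le_or_gt c m with h | h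
    · have e : m + 1 - c = (m - c) + 1 := by omega
      rw [e, ← tri_key (m - c)]
    · have e1 : m - c = 0 := by omega
      have e2 : m + 1 - c = 0 := by omega
      rw [e1, e2]

private lemma count_pairs (m c : ℕ) :
    (univ.filter fun q : Fin m × Fin m => (q.1 : ℕ) + c ≤ (q.2 : ℕ)).card
      = (m - c) * (m - c + 1) / 2 := by
  rw [Finset.card_filter, Fintype.sum_prod_type]
  have h1 : ∀ a : Fin m,
      (∑ b : Fin m, if (a : ℕ) + c ≤ (b : ℕ) then (1:ℕ) else 0) = m - ((a : ℕ) + c) := by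
    intro a
    rw [Fin.sum_univ_eq_sum_range (fun b => if (a : ℕ) + c ≤ b then (1:ℕ) else 0) m]
    exact count_ge m ((a : ℕ) + c)
  rw [Finset.sum_congr rfl fun a _ => h1 a]
  rw [Fin.sum_univ_eq_sum_range (fun a => m - (a + c)) m]
  rw [← Finset.sum_range_reflect]
  rw [Finset.sum_congr rfl (fun j hj => by
    rw [Finset.mem_range] at hj; omega : ∀ j ∈ range m, m - (m - 1 - j + c) = j + 1 - c)]
  exact tri_sum m c

private lemma drop_take_sum (l : List ℝ) {a b : ℕ} (h : a ≤ b) :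
    ((l.take b).drop a).sum = (l.take b).sum - (l.take a).sum := by
  have h1 := List.sum_take_add_sum_drop (l.take b) a
  rw [List.take_take, min_eq_left h] at h1
  linarith

private lemma card_perm_filter {m : ℕ} (π : Equiv.Perm (Fin m)) (P : Fin m × Fin m → Prop)
    [DecidablePred P] :
    (univ.filter fun p : Fin m × Fin m => P (π p.1, π p.2)).card
      = (univ.filter P).card := by
  apply Finset.card_bij (fun p _ => (π p.1, π p.2))
  · intro a ha
    simp only [mem_filter, mem_univ, true_and] at ha ⊢
    exact ha
  · intro a ha b hb hab
    simp only [Prod.mk.injEq] at hab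
    have h1 := π.injective hab.1
    have h2 := π.injective hab.2
    exact Prod.ext h1 h2
  · intro b hb
    refine ⟨(π⁻¹ b.1, π⁻¹ b.2), ?_, ?_⟩
    · simp only [mem_filter, mem_univ, true_and] at hb ⊢
      simpa using hb
    · simp

private lemma card_between {m : ℕ} (π : Equiv.Perm (Fin m)) (a b : Fin m) :
    (univ.filter fun k => a < π k ∧ π k < b).card = (b : ℕ) - (a : ℕ) - 1 := by
  have h : (univ.filter fun k => a < π k ∧ π k < b)
      = (Finset.Ioo a b).map π.symm.toEmbedding := by
    ext k
    simp only [mem_filter, mem_univ, true_and, Finset.mem_map, Finset.mem_Ioo,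
      Equiv.coe_toEmbedding]
    constructor
    · rintro ⟨h1, h2⟩; exact ⟨π k, ⟨h1, h2⟩, by simp⟩
    · rintro ⟨x, hx, rfl⟩; simpa using hx
  rw [h, Finset.card_map, Fin.card_Ioo]

private lemma card_pairs_perm {m : ℕ} (π : Equiv.Perm (Fin m)) (c : ℕ) :
    (univ.filter fun p : Fin m × Fin m => (π p.1 : ℕ) + c ≤ (π p.2 : ℕ)).card
      = (m - c) * (m - c + 1) / 2 := by
  rw [← count_pairs m c]
  exact card_perm_filter π (fun q => (q.1 : ℕ) + c ≤ (q.2 : ℕ))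

private lemma telescope (f : ℕ → ℝ) (h0 : f 0 = 0) (r : ℕ) :
    ∑ k ∈ Finset.Icc 1 r, (f k - f (k - 1)) = f r := by
  rw [← Finset.Ico_add_one_right_eq_Icc, Finset.sum_Ico_eq_sum_range]
  have e : ∀ i ∈ range r, f (1 + i) - f (1 + i - 1) = f (i + 1) - f i := by
    intro i _
    have e1 : 1 + i = i + 1 := by omega
    have e2 : 1 + i - 1 = i := by omega
    rw [e2, e1]
  rw [Nat.add_sub_cancel]
  rw [Finset.sum_congr rfl e, Finset.sum_range_sub f r, h0, sub_zero]


/-- The `LB_edge` lower bound for the SRFLP: with gaps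
`g i j = Σ_{π i < π k < π j} L k`, traffics `T` sorted non-decreasingly (with
multiplicity) over pairs `i < j`, lengths `Λ` sorted non-decreasingly, and
`Δ_k = k(k+1)/2`, the total traffic-weighted gap cost is at least
`Σ_{k=1}^{m−1} (Σ_{l=Δ_{k−1}+1}^{Δ_k} T_l) · (Σ_{t=1}^{m−1−k} Λ_t)`. -/
theorem srflp_lb_edge (m : ℕ) (hm : 1 ≤ m) (L : Fin m → ℝ) (hL : ∀ i, 0 ≤ L i)
    (C : Fin m → Fin m → ℝ) (hCsymm : ∀ i j, C i j = C j i) (hC : ∀ i j, 0 ≤ C i j)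
    (π : Equiv.Perm (Fin m))
    (g : Fin m → Fin m → ℝ)
    (hg : ∀ i j, π i < π j →
      g i j = ∑ k ∈ univ.filter (fun k => π i < π k ∧ π k < π j), L k)
    (T : List ℝ)
    (hT : T = Multiset.sort
      ((univ.filter (fun p : Fin m × Fin m => p.1 < p.2)).val.map fun p => C p.1 p.2) (· ≤ ·))
    (Λ : List ℝ) (hΛ : Λ = Multiset.sort (Finset.univ.val.map L) (· ≤ ·)) :
    ∑ k ∈ Finset.Icc 1 (m - 1),
        ((T.take (k * (k + 1) / 2)).drop ((k - 1) * k / 2)).sum * (Λ.take (m - 1 - k)).sum ≤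
      ∑ p ∈ univ.filter (fun p : Fin m × Fin m => π p.1 < π p.2), C p.1 p.2 * g p.1 p.2 := by
  set n := m - 1 with hn
  -- nonnegativity of sorted length entries
  have hlam0 : ∀ t, 0 ≤ Λ.getD t 0 := by
    intro t
    rcases lt_or_ge t Λ.length with h | h
    · rw [List.getD_eq_getElem _ _ h]
      have hmem : Λ[t] ∈ Λ := List.getElem_mem h
      set x := Λ[t] with hx
      rw [hΛ, Multiset.mem_sort] at hmem
      obtain ⟨i, -, hi⟩ := Multiset.mem_map.mp hmem
      rw [← hi]
      exact hL i
    · rw [List.getD_eq_default _ _ h]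
  -- Step A : pointwise lower bound on gaps
  have keyA : ∀ p : Fin m × Fin m, π p.1 < π p.2 →
      (Λ.take ((π p.2 : ℕ) - (π p.1 : ℕ) - 1)).sum ≤ g p.1 p.2 := by
    intro p hp
    rw [hg p.1 p.2 hp]
    have hle : (univ.filter fun k => π p.1 < π k ∧ π k < π p.2).val.map L
        ≤ (univ : Finset (Fin m)).val.map L :=
      Multiset.map_le_map (Finset.val_le_iff.mpr (Finset.subset_univ _))
    have h1 := multiset_take_sort_le _ _ hle
    rw [Multiset.card_map, ← Finset.card_def, card_between π _ _, ← hΛ] at h1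
    exact h1
  -- Step D : for each t, sum of smallest traffics bounds the heavy-pair traffic sum
  have keyD : ∀ t : ℕ,
      (T.take ((n - 1 - t) * (n - 1 - t + 1) / 2)).sum
        ≤ ∑ p ∈ univ.filter
            (fun p : Fin m × Fin m => (π p.1 : ℕ) + (t + 2) ≤ (π p.2 : ℕ)), C p.1 p.2 := by
    intro t
    set Q := univ.filter (fun p : Fin m × Fin m => (π p.1 : ℕ) + (t + 2) ≤ (π p.2 : ℕ)) with hQ
    have hQcard : Q.card = (n - 1 - t) * (n - 1 - t + 1) / 2 := by
      rw [hQ, card_pairs_perm π (t + 2)]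
      have e : m - (t + 2) = n - 1 - t := by omega
      rw [e]
    have hwd : ∀ p ∈ Q, π p.1 < π p.2 := by
      intro p hp
      rw [hQ, mem_filter] at hp
      rw [Fin.lt_def]
      omega
    set φ : Fin m × Fin m → Fin m × Fin m := fun p => if p.1 < p.2 then p else (p.2, p.1) with hφ
    have hinj : ∀ x ∈ Q, ∀ y ∈ Q, φ x = φ y → x = y := by
      intro x hx y hy hxy
      have hx2 : π x.1 < π x.2 := hwd x hx
      have hy2 : π y.1 < π y.2 := hwd y hy
      rw [hφ] at hxy
      simp only at hxy
      split_ifs at hxy with h1 h2 h2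
      · exact hxy
      · rw [Prod.ext_iff] at hxy
        simp only at hxy
        exfalso
        rw [hxy.1, hxy.2] at hx2
        exact absurd hy2 (lt_asymm hx2)
      · rw [Prod.ext_iff] at hxy
        simp only at hxy
        exfalso
        rw [← hxy.1, ← hxy.2] at hy2
        exact absurd hy2 (lt_asymm hx2)
      · rw [Prod.ext_iff] at hxy
        simp only at hxy
        exact Prod.ext hxy.2 hxy.1
    have hsum : ∑ q ∈ Q.image φ, C q.1 q.2 = ∑ p ∈ Q, C p.1 p.2 := by
      rw [Finset.sum_image hinj]
      apply Finset.sum_congr rfl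
      intro p _
      rw [hφ]
      simp only
      split_ifs with h
      · rfl
      · exact hCsymm p.2 p.1
    have hsub : Q.image φ ⊆ univ.filter (fun p : Fin m × Fin m => p.1 < p.2) := by
      intro q hq
      rw [Finset.mem_image] at hq
      obtain ⟨p, hp, rfl⟩ := hq
      have hp2 := hwd p hp
      rw [mem_filter]
      refine ⟨mem_univ _, ?_⟩
      rw [hφ]
      simp only
      split_ifs with h
      · exact h
      · have hne : p.1 ≠ p.2 := by
          intro he
          rw [he] at hp2
          exact lt_irrefl _ hp2
        exact lt_of_le_of_ne (not_lt.mp h) (Ne.symm hne)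
    have hcard2 : (Q.image φ).card = Q.card := Finset.card_image_of_injOn hinj
    have hmle : (Q.image φ).val.map (fun p : Fin m × Fin m => C p.1 p.2)
        ≤ (univ.filter (fun p : Fin m × Fin m => p.1 < p.2)).val.map
            (fun p : Fin m × Fin m => C p.1 p.2) :=
      Multiset.map_le_map (Finset.val_le_iff.mpr hsub)
    have h1 := multiset_take_sort_le _ _ hmle
    rw [Multiset.card_map, ← Finset.card_def, hcard2, hQcard, ← hT] at h1
    have h2 : ((Q.image φ).val.map (fun p : Fin m × Fin m => C p.1 p.2)).sum
        = ∑ q ∈ Q.image φ, C q.1 q.2 := rfl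
    rw [h2, hsum] at h1
    exact h1
  -- rewrite the LHS by swapping sums and telescoping
  have hLHS : ∑ k ∈ Finset.Icc 1 n,
      ((T.take (k * (k + 1) / 2)).drop ((k - 1) * k / 2)).sum * (Λ.take (n - k)).sum
      = ∑ t ∈ range n, (T.take ((n - 1 - t) * (n - 1 - t + 1) / 2)).sum * Λ.getD t 0 := by
    have step1 : ∀ k ∈ Finset.Icc 1 n,
        ((T.take (k * (k + 1) / 2)).drop ((k - 1) * k / 2)).sum * (Λ.take (n - k)).sum
        = ∑ t ∈ range n, (if t < n - k then
            ((T.take (k * (k + 1) / 2)).sum - (T.take ((k - 1) * (k - 1 + 1) / 2)).sum)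
              * Λ.getD t 0 else 0) := by
      intro k hk
      rw [Finset.mem_Icc] at hk
      have hB : ((T.take (k * (k + 1) / 2)).drop ((k - 1) * k / 2)).sum
          = (T.take (k * (k + 1) / 2)).sum - (T.take ((k - 1) * (k - 1 + 1) / 2)).sum := by
        have e : (k - 1) * (k - 1 + 1) = (k - 1) * k := by
          have : k - 1 + 1 = k := by omega
          rw [this]
        rw [e, drop_take_sum T (Nat.div_le_div_right
          (Nat.mul_le_mul (Nat.sub_le k 1) (Nat.le_succ k)))]
      rw [hB, sum_take_getD Λ (n - k), Finset.mul_sum, ← Finset.sum_filter]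
      have hfil : (range n).filter (fun t => t < n - k) = range (n - k) := by
        ext t
        simp only [Finset.mem_filter, Finset.mem_range]
        omega
      rw [hfil]
    rw [Finset.sum_congr rfl step1, Finset.sum_comm]
    apply Finset.sum_congr rfl
    intro t ht
    rw [← Finset.sum_filter]
    have hfil : (Finset.Icc 1 n).filter (fun k => t < n - k) = Finset.Icc 1 (n - 1 - t) := by
      ext k
      simp only [Finset.mem_filter, Finset.mem_Icc]
      omega
    rw [hfil, ← Finset.sum_mul]
    congr 1
    exact telescope (fun k => (T.take (k * (k + 1) / 2)).sum) (by simp) (n - 1 - t)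
  -- swap sums on the intermediate quantity
  have hswap : ∑ p ∈ univ.filter (fun p : Fin m × Fin m => π p.1 < π p.2),
        C p.1 p.2 * (Λ.take ((π p.2 : ℕ) - (π p.1 : ℕ) - 1)).sum
      = ∑ t ∈ range n, (∑ p ∈ univ.filter
          (fun p : Fin m × Fin m => (π p.1 : ℕ) + (t + 2) ≤ (π p.2 : ℕ)), C p.1 p.2)
            * Λ.getD t 0 := by
    have step1 : ∀ p ∈ univ.filter (fun p : Fin m × Fin m => π p.1 < π p.2),
        C p.1 p.2 * (Λ.take ((π p.2 : ℕ) - (π p.1 : ℕ) - 1)).sum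
        = ∑ t ∈ range n, (if t < (π p.2 : ℕ) - (π p.1 : ℕ) - 1 then
            C p.1 p.2 * Λ.getD t 0 else 0) := by
      intro p _
      rw [sum_take_getD Λ ((π p.2 : ℕ) - (π p.1 : ℕ) - 1), Finset.mul_sum, ← Finset.sum_filter]
      have hfil : (range n).filter (fun t => t < (π p.2 : ℕ) - (π p.1 : ℕ) - 1)
          = range ((π p.2 : ℕ) - (π p.1 : ℕ) - 1) := by
        ext u
        simp only [Finset.mem_filter, Finset.mem_range]
        have h2 := (π p.2).isLt
        omega
      rw [hfil]
    rw [Finset.sum_congr rfl step1, Finset.sum_comm]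
    apply Finset.sum_congr rfl
    intro t _
    rw [← Finset.sum_filter]
    have hfe : (univ.filter (fun p : Fin m × Fin m => π p.1 < π p.2)).filter
          (fun p => t < (π p.2 : ℕ) - (π p.1 : ℕ) - 1)
        = univ.filter (fun p : Fin m × Fin m => (π p.1 : ℕ) + (t + 2) ≤ (π p.2 : ℕ)) := by
      rw [Finset.filter_filter]
      ext p
      simp only [Finset.mem_filter, Finset.mem_univ, true_and, Fin.lt_def]
      omega
    rw [hfe, ← Finset.sum_mul]
  -- put everything together
  rw [hLHS]
  calc ∑ t ∈ range n, (T.take ((n - 1 - t) * (n - 1 - t + 1) / 2)).sum * Λ.getD t 0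
      ≤ ∑ t ∈ range n, (∑ p ∈ univ.filter
          (fun p : Fin m × Fin m => (π p.1 : ℕ) + (t + 2) ≤ (π p.2 : ℕ)), C p.1 p.2)
            * Λ.getD t 0 :=
        Finset.sum_le_sum fun t _ => mul_le_mul_of_nonneg_right (keyD t) (hlam0 t)
    _ = ∑ p ∈ univ.filter (fun p : Fin m × Fin m => π p.1 < π p.2),
          C p.1 p.2 * (Λ.take ((π p.2 : ℕ) - (π p.1 : ℕ) - 1)).sum := hswap.symm
    _ ≤ ∑ p ∈ univ.filter (fun p : Fin m × Fin m => π p.1 < π p.2),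
          C p.1 p.2 * g p.1 p.2 :=
        Finset.sum_le_sum fun p hp =>
          mul_le_mul_of_nonneg_left (keyA p (mem_filter.mp hp).2) (hC p.1 p.2)
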